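/- Define on the Takiff algebra d = g ⊗ ℝ[ε]/(ε^n) the bilinear form ⟨⟨u⊗ε^p, v⊗ε^q⟩⟩ = ℓ_{p+q} ⟨u,v⟩ where ⟨·,·⟩ is a nondegenerate invariant symmetric bilinear form on g and ℓ₀,…,ℓ_{n−1} ∈ ℝ with ℓ_{n−1} ≠ 0 (and ℓ_k = 0 for k ≥ n). Then ⟨⟨·,·⟩⟩ is a nondegenerate, symmetric, ad-invariant bilinear form on d. -/

import Mathlib

lemma takiff_conv_helper (n : ℕ) (f : ℕ → ℕ → ℝ) (hf : ∀ a b, n ≤ a + b → f a b = 0) :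
    ∑ p ∈ Finset.range n, ∑ i ∈ Finset.range (p + 1), f i (p - i)
      = ∑ a ∈ Finset.range n, ∑ b ∈ Finset.range n, f a b := by
  have h1 : ∀ p, ∑ i ∈ Finset.range (p + 1), f i (p - i)
      = ∑ ij ∈ Finset.HasAntidiagonal.antidiagonal p, f ij.1 ij.2 := fun p =>
    (Finset.Nat.sum_antidiagonal_eq_sum_range_succ_mk (fun ij => f ij.1 ij.2) p).symm
  simp only [h1]
  have hRHS : ∑ a ∈ Finset.range n, ∑ b ∈ Finset.range n, f a b
      = ∑ ab ∈ (Finset.range n ×ˢ Finset.range n).filter (fun ab => ab.1 + ab.2 < n),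
          f ab.1 ab.2 := by
    rw [← Finset.sum_product']
    exact (Finset.sum_filter_of_ne (fun ab _ hne => by
      by_contra h; exact hne (hf ab.1 ab.2 (Nat.le_of_not_lt h)))).symm
  rw [hRHS, Finset.sum_sigma']
  refine Finset.sum_nbij' (fun x => x.2) (fun ab => ⟨ab.1 + ab.2, ab⟩) ?_ ?_ ?_ ?_ ?_
  · rintro ⟨p, a, b⟩ hx
    simp only [Finset.mem_sigma, Finset.mem_range, Finset.HasAntidiagonal.mem_antidiagonal] at hx
    simp only [Finset.mem_filter, Finset.mem_product, Finset.mem_range]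
    omega
  · rintro ⟨a, b⟩ hab
    simp only [Finset.mem_filter, Finset.mem_product, Finset.mem_range] at hab
    dsimp only
    exact Finset.mem_sigma.mpr ⟨Finset.mem_range.mpr hab.2, Finset.HasAntidiagonal.mem_antidiagonal.mpr rfl⟩
  · rintro ⟨p, a, b⟩ hx
    simp only [Finset.mem_sigma, Finset.mem_range, Finset.HasAntidiagonal.mem_antidiagonal] at hx
    simp [hx.2]
  · rintro ⟨a, b⟩ _; rfl
  · rintro ⟨p, a, b⟩ _; rfl

theorem stmt_8 {g : Type*} [LieRing g] [LieAlgebra ℝ g]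
    (B : LinearMap.BilinForm ℝ g) (hBsymm : ∀ x y, B x y = B y x)
    (hBinv : ∀ x y z : g, B ⁅x, y⁆ z = B x ⁅y, z⁆)
    (hBnd : B.Nondegenerate)
    (n : ℕ) (hn : 1 ≤ n)
    (ℓ : ℕ → ℝ) (hltop : ℓ (n - 1) ≠ 0) (hlzero : ∀ k, n ≤ k → ℓ k = 0)
    (BB : (ℕ → g) → (ℕ → g) → ℝ)
    (hBB : ∀ u v, BB u v =
      ∑ p ∈ Finset.range n, ∑ q ∈ Finset.range n, ℓ (p + q) * B (u p) (v q))
    (br : (ℕ → g) → (ℕ → g) → (ℕ → g))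
    (hbr : ∀ u v k, br u v k =
      if k < n then ∑ i ∈ Finset.range (k + 1), ⁅u i, v (k - i)⁆ else 0) :
    (∀ u v, BB u v = BB v u) ∧
    (∀ u v w, BB (br u v) w = BB u (br v w)) ∧
    (∀ u, (∀ v, BB u v = 0) → ∀ p < n, u p = 0) := by
  refine ⟨?_, ?_, ?_⟩
  · intro u v
    rw [hBB, hBB, Finset.sum_comm]
    exact Finset.sum_congr rfl fun q _ => Finset.sum_congr rfl fun p _ => by
      rw [hBsymm, Nat.add_comm]
  · intro u v w
    rw [hBB, hBB]
    have hL : ∀ p ∈ Finset.range n, ∀ q ∈ Finset.range n,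
        ℓ (p + q) * B (br u v p) (w q)
          = ∑ i ∈ Finset.range (p + 1), ℓ (p + q) * B (u i) ⁅v (p - i), w q⁆ := by
      intro p hp q hq
      rw [hbr, if_pos (Finset.mem_range.mp hp), map_sum, LinearMap.coe_sum,
        Finset.sum_apply, Finset.mul_sum]
      exact Finset.sum_congr rfl fun i _ => by rw [hBinv]
    have hR : ∀ p ∈ Finset.range n, ∀ q ∈ Finset.range n,
        ℓ (p + q) * B (u p) (br v w q)
          = ∑ j ∈ Finset.range (q + 1), ℓ (p + q) * B (u p) ⁅v j, w (q - j)⁆ := by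
      intro p hp q hq
      rw [hbr, if_pos (Finset.mem_range.mp hq), map_sum, Finset.mul_sum]
    rw [Finset.sum_congr rfl fun p hp => Finset.sum_congr rfl (hL p hp),
        Finset.sum_congr rfl fun p hp => Finset.sum_congr rfl (hR p hp)]
    -- LHS: ∑ p ∑ q ∑ i≤p ; RHS: ∑ p ∑ q ∑ j≤q
    rw [Finset.sum_comm]
    -- LHS now: ∑ q ∑ p ∑ i≤p
    have lhs_eq : ∀ q ∈ Finset.range n,
        (∑ p ∈ Finset.range n, ∑ i ∈ Finset.range (p + 1),
            ℓ (p + q) * B (u i) ⁅v (p - i), w q⁆)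
        = ∑ a ∈ Finset.range n, ∑ b ∈ Finset.range n,
            ℓ (a + b + q) * B (u a) ⁅v b, w q⁆ := by
      intro q _
      have := takiff_conv_helper n (fun a b => ℓ (a + b + q) * B (u a) ⁅v b, w q⁆)
        (fun a b hab => by rw [hlzero _ (le_trans hab (Nat.le_add_right _ _)), zero_mul])
      rw [← this]
      exact Finset.sum_congr rfl fun p hp => Finset.sum_congr rfl fun i hi => by
        have h2 : i + (p - i) = p := Nat.add_sub_cancel' (Nat.lt_succ_iff.mp (Finset.mem_range.mp hi))
        rw [h2]
    have rhs_eq : ∀ p ∈ Finset.range n,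
        (∑ q ∈ Finset.range n, ∑ j ∈ Finset.range (q + 1),
            ℓ (p + q) * B (u p) ⁅v j, w (q - j)⁆)
        = ∑ b ∈ Finset.range n, ∑ c ∈ Finset.range n,
            ℓ (p + (b + c)) * B (u p) ⁅v b, w c⁆ := by
      intro p _
      have := takiff_conv_helper n (fun b c => ℓ (p + (b + c)) * B (u p) ⁅v b, w c⁆)
        (fun b c hbc => by rw [hlzero _ (le_trans hbc (Nat.le_add_left _ _)), zero_mul])
      rw [← this]
      exact Finset.sum_congr rfl fun q hq => Finset.sum_congr rfl fun j hj => by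
        have h2 : j + (q - j) = q := Nat.add_sub_cancel' (Nat.lt_succ_iff.mp (Finset.mem_range.mp hj))
        rw [h2]
    rw [Finset.sum_congr rfl lhs_eq, Finset.sum_congr rfl rhs_eq]
    -- LHS: ∑ q ∑ a ∑ b ℓ(a+b+q)... ; RHS: ∑ p ∑ b ∑ c ℓ(p+(b+c))...
    rw [Finset.sum_comm]
    refine Finset.sum_congr rfl fun a _ => ?_
    rw [Finset.sum_comm]
    refine Finset.sum_congr rfl fun b _ => Finset.sum_congr rfl fun c _ => ?_
    ring_nf
  · intro u hu p hp
    induction p using Nat.strong_induction_on with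
    | _ p ih =>
      apply hBnd.1
      intro x
      classical
      have hv := hu (fun k => if k = n - 1 - p then x else 0)
      rw [hBB] at hv
      have hq : n - 1 - p ∈ Finset.range n := Finset.mem_range.mpr (by omega)
      have hsum : ∀ p' ∈ Finset.range n,
          (∑ q ∈ Finset.range n, ℓ (p' + q) *
            B (u p') (if q = n - 1 - p then x else 0))
          = ℓ (p' + (n - 1 - p)) * B (u p') x := by
        intro p' _
        rw [Finset.sum_eq_single (n - 1 - p)]
        · simp
        · intro q _ hq'; simp [hq']
        · intro h; exact absurd hq h
      rw [Finset.sum_congr rfl hsum] at hv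
      have hsum2 : ∀ p' ∈ Finset.range n, p' ≠ p →
          ℓ (p' + (n - 1 - p)) * B (u p') x = 0 := by
        intro p' hp' hne
        rcases lt_or_gt_of_ne hne with h | h
        · rw [ih p' h (Finset.mem_range.mp hp')]; simp
        · rw [hlzero _ (by omega), zero_mul]
      rw [Finset.sum_eq_single p (fun p' h1 h2 => hsum2 p' h1 h2)
        (fun h => absurd (Finset.mem_range.mpr hp) h)] at hv
      have : p + (n - 1 - p) = n - 1 := by omega
      rw [this] at hv
      have := mul_eq_zero.mp hv
      tauto
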